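/- Let ℓ be a natural number, let p ≥ 1 be a real number, and let d_0 ≤ d_1 ≤ ⋯ ≤ d_ℓ be nonnegative integers such that d_0 ∈ {0, 1} and, for every i ∈ {0, …, ℓ−1}, either d_{i+1} = d_i or d_i = 2^i. Then d_ℓ^p ≥ d_0 + ∑_{i=1}^{ℓ} p·2^{(i−1)(p−1)}·(d_i − d_{i−1}). -/

import Mathlib

lemma aux_convex (x y p : ℝ) (hx : 0 < x) (hxy : x ≤ y) (hp : 1 ≤ p) :
    x ^ p + p * x ^ (p - 1) * (y - x) ≤ y ^ p := by
  have hs : (-1 : ℝ) ≤ (y - x) / x := by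
    have : (0:ℝ) ≤ (y - x) / x := div_nonneg (by linarith) hx.le
    linarith
  have hb := one_add_mul_self_le_rpow_one_add hs hp
  have hmul := mul_le_mul_of_nonneg_left hb (Real.rpow_nonneg hx.le p)
  have h1 : (1 : ℝ) + (y - x) / x = y / x := by field_simp; ring
  rw [h1] at hmul
  have h2 : x ^ p * (y / x) ^ p = y ^ p := by
    rw [Real.div_rpow (by linarith) hx.le, mul_div_cancel₀]
    exact (Real.rpow_pos_of_pos hx p).ne'
  rw [h2] at hmul
  calc x ^ p + p * x ^ (p - 1) * (y - x)
      = x ^ p * (1 + p * ((y - x) / x)) := by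
        rw [Real.rpow_sub hx, Real.rpow_one]; field_simp
    _ ≤ y ^ p := hmul

/-- If `d_0 ≤ ⋯ ≤ d_ℓ` are nonnegative integers with `d_0 ∈ {0,1}` and, for
each `i < ℓ`, either `d_{i+1} = d_i` or `d_i = 2^i`, then
`d_ℓ^p ≥ d_0 + ∑_{i=1}^{ℓ} p·2^{(i−1)(p−1)}·(d_i − d_{i−1})` for every real `p ≥ 1`. -/
theorem stmt_4 (ℓ : ℕ) (p : ℝ) (hp : 1 ≤ p) (d : ℕ → ℕ)
    (hd0 : d 0 = 0 ∨ d 0 = 1)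
    (hmono : ∀ i < ℓ, d i ≤ d (i + 1))
    (hmax : ∀ i < ℓ, d (i + 1) = d i ∨ d i = 2 ^ i) :
    (d 0 : ℝ) +
        ∑ i ∈ Finset.Icc 1 ℓ,
          p * (2 : ℝ) ^ (((i : ℝ) - 1) * (p - 1)) * ((d i : ℝ) - (d (i - 1) : ℝ))
      ≤ (d ℓ : ℝ) ^ p := by
  induction ℓ with
  | zero =>
    simp only [Finset.Icc_self, Finset.Icc_eq_empty_of_lt (by norm_num : (1:ℕ) > 0)]
    rcases hd0 with h | h <;> simp [h, Real.zero_rpow (by linarith : p ≠ 0)]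
  | succ n ih =>
    have IH := ih (fun i hi => hmono i (Nat.lt_succ_of_lt hi))
      (fun i hi => hmax i (Nat.lt_succ_of_lt hi))
    rw [Finset.sum_Icc_succ_top (Nat.one_le_iff_ne_zero.mpr (Nat.succ_ne_zero n))]
    have hdm : (d n : ℝ) ≤ (d (n+1) : ℝ) := by
      exact_mod_cast hmono n (Nat.lt_succ_self n)
    have hcast : ((n + 1 : ℕ) : ℝ) - 1 = (n : ℝ) := by push_cast; ring
    rw [hcast]
    simp only [Nat.add_sub_cancel]
    rcases hmax n (Nat.lt_succ_self n) with h | h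
    · rw [h]; simpa using IH
    · have hkey : (d n : ℝ) ^ p + p * (2:ℝ) ^ ((n:ℝ) * (p - 1)) * ((d (n+1) : ℝ) - (d n : ℝ))
          ≤ (d (n+1) : ℝ) ^ p := by
        have hx : (0:ℝ) < (d n : ℝ) := by
          rw [h]; positivity
        have h2 : (2:ℝ) ^ ((n:ℝ) * (p - 1)) = (d n : ℝ) ^ (p - 1) := by
          rw [h]
          push_cast
          rw [← Real.rpow_natCast 2 n, ← Real.rpow_mul (by norm_num)]
        rw [h2]
        exact aux_convex _ _ p hx hdm hp
      linarith
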